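/- Let R be a commutative ring. Consider a commutative diagram of R-modules with exact rows 0 → P' →(j_P) P →(q_P) P'' → 0 and 0 → Q' →(j_Q) Q →(q_Q) Q'' → 0 and injective vertical maps i' : P' → Q', i : P → Q, i'' : P'' → Q''. Assume that the top row is split (there exist R-linear maps h_P : P → P' and t_P : P'' → P with j_P ∘ h_P + t_P ∘ q_P = id_P, h_P ∘ j_P = id, q_P ∘ t_P = id), that i admits an R-linear retraction, and that s'' : Q'' → P'' is an R-linear retraction of i'' (s'' ∘ i'' = id). Then there exist R-linear retractions s : Q → P of i and s' : Q' → P' of i' such that q_P ∘ s = s'' ∘ q_Q and j_P ∘ s' = s ∘ j_Q. -/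
import Mathlib


universe u

/-- Given a commutative diagram of `R`-modules with exact rows
`0 → P' → P → P'' → 0` and `0 → Q' → Q → Q'' → 0` and injective vertical maps
`i', i, i''`, where the top row is split (with a fixed pair of compatible splittings),
`i` admits a retraction, and `s''` is a retraction of `i''`, there exist retractions
`s` of `i` and `s'` of `i'` which are compatible with the diagram:
`q_P ∘ s = s'' ∘ q_Q` and `j_P ∘ s' = s ∘ j_Q`. -/
theorem exists_compatible_retractions (R : Type u) [CommRing R]
    (P' P P'' Q' Q Q'' : Type u)
    [AddCommGroup P'] [AddCommGroup P] [AddCommGroup P'']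
    [AddCommGroup Q'] [AddCommGroup Q] [AddCommGroup Q'']
    [Module R P'] [Module R P] [Module R P'']
    [Module R Q'] [Module R Q] [Module R Q'']
    (jP : P' →ₗ[R] P) (qP : P →ₗ[R] P'')
    (jQ : Q' →ₗ[R] Q) (qQ : Q →ₗ[R] Q'')
    (i' : P' →ₗ[R] Q') (i : P →ₗ[R] Q) (i'' : P'' →ₗ[R] Q'')
    -- exactness of the rows
    (hjP : Function.Injective jP) (hqP : Function.Surjective qP)
    (hPexact : LinearMap.range jP = LinearMap.ker qP)
    (hjQ : Function.Injective jQ) (hqQ : Function.Surjective qQ)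
    (hQexact : LinearMap.range jQ = LinearMap.ker qQ)
    -- commutativity of the diagram
    (hcomm₁ : i ∘ₗ jP = jQ ∘ₗ i') (hcomm₂ : i'' ∘ₗ qP = qQ ∘ₗ i)
    -- injectivity of the vertical maps
    (hi' : Function.Injective i') (hi : Function.Injective i)
    (hi'' : Function.Injective i'')
    -- a splitting of the top row
    (hP : P →ₗ[R] P') (tP : P'' →ₗ[R] P)
    (hsplit : jP ∘ₗ hP + tP ∘ₗ qP = LinearMap.id)
    (hretr : hP ∘ₗ jP = LinearMap.id) (hsect : qP ∘ₗ tP = LinearMap.id)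
    -- `i` admits a retraction, and `s''` is a retraction of `i''`
    (hi_retr : ∃ s₀ : Q →ₗ[R] P, s₀ ∘ₗ i = LinearMap.id)
    (s'' : Q'' →ₗ[R] P'') (hs'' : s'' ∘ₗ i'' = LinearMap.id) :
    ∃ (s : Q →ₗ[R] P) (s' : Q' →ₗ[R] P'),
      s ∘ₗ i = LinearMap.id ∧ s' ∘ₗ i' = LinearMap.id ∧
      qP ∘ₗ s = s'' ∘ₗ qQ ∧ jP ∘ₗ s' = s ∘ₗ jQ := by
  obtain ⟨s₀, hs₀⟩ := hi_retr
  have hqQjQ : ∀ x, qQ (jQ x) = 0 := by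
    intro x
    have : jQ x ∈ LinearMap.ker qQ := hQexact ▸ LinearMap.mem_range_self _ x
    simpa using this
  have hqPjP : ∀ x, qP (jP x) = 0 := by
    intro x
    have : jP x ∈ LinearMap.ker qP := hPexact ▸ LinearMap.mem_range_self _ x
    simpa using this
  set s : Q →ₗ[R] P := jP ∘ₗ hP ∘ₗ s₀ + tP ∘ₗ s'' ∘ₗ qQ with hsdef
  have hsplit' : ∀ x, jP (hP x) + tP (qP x) = x := fun x =>
    LinearMap.ext_iff.mp hsplit x
  have hsi : s ∘ₗ i = LinearMap.id := by
    ext x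
    have h1 : s₀ (i x) = x := LinearMap.ext_iff.mp hs₀ x
    have h2 : qQ (i x) = i'' (qP x) := (LinearMap.ext_iff.mp hcomm₂ x).symm
    have h3 : s'' (i'' (qP x)) = qP x := LinearMap.ext_iff.mp hs'' (qP x)
    simp [hsdef, h1, h2, h3, hsplit' x]
  have hqPs : qP ∘ₗ s = s'' ∘ₗ qQ := by
    ext x
    have h4 : qP (tP (s'' (qQ x))) = s'' (qQ x) :=
      LinearMap.ext_iff.mp hsect (s'' (qQ x))
    simp [hsdef, hqPjP, h4]
  refine ⟨s, hP ∘ₗ s ∘ₗ jQ, hsi, ?_, hqPs, ?_⟩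
  · ext x
    have h5 : jQ (i' x) = i (jP x) := (LinearMap.ext_iff.mp hcomm₁ x).symm
    have h6 : s (i (jP x)) = jP x := LinearMap.ext_iff.mp hsi (jP x)
    have h7 : hP (jP x) = x := LinearMap.ext_iff.mp hretr x
    simp [h5, h6, h7]
  · ext x
    have : jP (hP (s (jQ x))) + tP (qP (s (jQ x))) = s (jQ x) := hsplit' _
    have hq : qP (s (jQ x)) = s'' (qQ (jQ x)) := LinearMap.ext_iff.mp hqPs (jQ x)
    rw [hq, hqQjQ] at this
    simp only [map_zero, add_zero] at this
    simpa using this
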